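/- Let C₁ > 0, C₂ > 0 and T > 0. Suppose f : [0,T] → ℝ is continuous on [0,T] and differentiable on (0,T), and satisfies the differential inequality f'(t) ≤ -C₁·f(t)² + C₂ for all t ∈ (0,T). Then for every t ∈ (0,T), f(t) ≤ 1/(C₁·t) + √(C₂/C₁). -/

import Mathlib

/-- Scalar ODE comparison principle underlying the Shi-type estimate:
if `f` is continuous on `[0,T]`, differentiable on `(0,T)`, and satisfies
`f' ≤ -C₁ f² + C₂` there, then `f t ≤ 1/(C₁ t) + √(C₂/C₁)` on `(0,T)`. -/
theorem riccati_comparison (C₁ C₂ T : ℝ) (hC₁ : 0 < C₁) (hC₂ : 0 < C₂) (hT : 0 < T)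
    (f : ℝ → ℝ) (hcont : ContinuousOn f (Set.Icc 0 T))
    (hdiff : ∀ t ∈ Set.Ioo 0 T, DifferentiableAt ℝ f t)
    (hineq : ∀ t ∈ Set.Ioo 0 T, deriv f t ≤ -C₁ * (f t) ^ 2 + C₂) :
    ∀ t ∈ Set.Ioo 0 T, f t ≤ 1 / (C₁ * t) + Real.sqrt (C₂ / C₁) := by
  rintro t₀ ⟨ht₀0, ht₀T⟩
  by_contra hcon
  push_neg at hcon
  set c := Real.sqrt (C₂ / C₁) with hcdef
  have hc0 : 0 < c := Real.sqrt_pos.mpr (div_pos hC₂ hC₁)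
  have hc2 : C₁ * c ^ 2 = C₂ := by
    rw [Real.sq_sqrt (div_pos hC₂ hC₁).le]
    field_simp
  set h : ℝ → ℝ := fun t => (C₁ * t)⁻¹ + c with hhdef
  set g : ℝ → ℝ := fun t => f t - h t with hgdef
  have hgt₀ : 0 < g t₀ := by
    have h1 : 1 / (C₁ * t₀) + c < f t₀ := hcon
    simp only [hgdef, hhdef, one_div] at h1 ⊢
    linarith
  -- bound on f
  obtain ⟨x₀, hx₀, hMx⟩ := isCompact_Icc.exists_isMaxOn
    (Set.nonempty_Icc.mpr hT.le) hcont
  set M : ℝ := f x₀ with hMdef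
  -- choose a small starting point a with g a ≤ 0
  set a : ℝ := min (t₀ / 2) ((C₁ * (max M 0 + 1))⁻¹) with hadef
  have hM1 : (0:ℝ) < max M 0 + 1 := by positivity
  have ha0 : 0 < a := lt_min (by linarith) (by positivity)
  have hat₀ : a < t₀ := (min_le_left _ _).trans_lt (by linarith)
  have hga : g a ≤ 0 := by
    have ha' : a ≤ (C₁ * (max M 0 + 1))⁻¹ := min_le_right _ _
    have hCa : C₁ * a ≤ (max M 0 + 1)⁻¹ := by
      have := mul_le_mul_of_nonneg_left ha' hC₁.le
      calc C₁ * a ≤ C₁ * (C₁ * (max M 0 + 1))⁻¹ := this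
        _ = (max M 0 + 1)⁻¹ := by
            rw [mul_inv]
            field_simp
    have hainv : max M 0 + 1 ≤ (C₁ * a)⁻¹ := by
      have hCa0 : 0 < C₁ * a := by positivity
      rw [le_inv_comm₀ hM1 hCa0]
      simpa using hCa
    have hfa : f a ≤ max M 0 :=
      (hMx ⟨ha0.le, (hat₀.le.trans ht₀T.le)⟩).trans (le_max_left _ _)
    simp only [hgdef, hhdef]
    nlinarith
  -- the set where g ≤ 0
  have hIcc_sub : Set.Icc a t₀ ⊆ Set.Icc 0 T := Set.Icc_subset_Icc ha0.le ht₀T.le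
  have hhcont : ContinuousOn h (Set.Icc a t₀) := by
    apply ContinuousOn.add _ continuousOn_const
    intro x hx
    have hx0 : (0:ℝ) < x := ha0.trans_le hx.1
    exact (ContinuousAt.inv₀ (by fun_prop) (by positivity)).continuousWithinAt
  have hgcont : ContinuousOn g (Set.Icc a t₀) := (hcont.mono hIcc_sub).sub hhcont
  set K : Set ℝ := Set.Icc a t₀ ∩ g ⁻¹' Set.Iic 0 with hKdef
  have hKclosed : IsClosed K :=
    hgcont.preimage_isClosed_of_isClosed isClosed_Icc isClosed_Iic
  have hKne : K.Nonempty := ⟨a, Set.left_mem_Icc.mpr hat₀.le, hga⟩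
  have hKbdd : BddAbove K := ⟨t₀, fun x hx => hx.1.2⟩
  set s : ℝ := sSup K with hsdef
  have hsK : s ∈ K := hKclosed.csSup_mem hKne hKbdd
  have hgs : g s ≤ 0 := hsK.2
  have hsa : a ≤ s := hsK.1.1
  have hst₀ : s < t₀ := lt_of_le_of_ne hsK.1.2 (fun e => by rw [e] at hgs; linarith)
  have hs0 : 0 < s := ha0.trans_le hsa
  -- on (s, t₀], g > 0
  have hgpos : ∀ x ∈ Set.Ioo s t₀, 0 < g x := by
    intro x hx
    by_contra hgx
    push_neg at hgx
    have : x ∈ K := ⟨⟨hsa.trans hx.1.le, hx.2.le⟩, hgx⟩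
    exact absurd (le_csSup hKbdd this) (not_le.mpr hx.1)
  -- g is strictly decreasing on [s, t₀]
  have hanti : StrictAntiOn g (Set.Icc s t₀) := by
    apply strictAntiOn_of_deriv_neg (convex_Icc s t₀)
      (hgcont.mono (Set.Icc_subset_Icc hsa le_rfl))
    intro x hx
    rw [interior_Icc] at hx
    have hx0 : 0 < x := hs0.trans hx.1
    have hxIoo : x ∈ Set.Ioo 0 T := ⟨hx0, hx.2.trans ht₀T⟩
    have hCx : C₁ * x ≠ 0 := by positivity
    have hd1 : HasDerivAt (fun t => C₁ * t) C₁ x := by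
      simpa using (hasDerivAt_id x).const_mul C₁
    have hd2 : HasDerivAt h (-C₁ / (C₁ * x) ^ 2) x := (hd1.inv hCx).add_const c
    have hdg : HasDerivAt g (deriv f x - -C₁ / (C₁ * x) ^ 2) x :=
      ((hdiff x hxIoo).hasDerivAt).sub hd2
    rw [hdg.deriv]
    have hfx : h x < f x := by
      have := hgpos x hx
      simp only [hgdef] at this; linarith
    have hhx : 0 < h x := by
      simp only [hhdef]; positivity
    have hsq : (h x) ^ 2 ≤ (f x) ^ 2 := by nlinarith
    have h1 : deriv f x ≤ -C₁ * (h x) ^ 2 + C₂ := by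
      have := hineq x hxIoo
      nlinarith
    have h2 : -C₁ * (h x) ^ 2 + C₂ + C₁ / (C₁ * x) ^ 2 = -2 * c / x := by
      simp only [hhdef]
      field_simp
      linear_combination (-C₁ * x ^ 2) * hc2
    have h3 : -2 * c / x < 0 := by
      apply div_neg_of_neg_of_pos (by linarith) hx0
    calc deriv f x - -C₁ / (C₁ * x) ^ 2 = deriv f x + C₁ / (C₁ * x) ^ 2 := by ring
      _ ≤ -C₁ * h x ^ 2 + C₂ + C₁ / (C₁ * x) ^ 2 := add_le_add_left h1 _
      _ = -2 * c / x := h2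
      _ < 0 := h3
  have := hanti (Set.left_mem_Icc.mpr hst₀.le) (Set.right_mem_Icc.mpr hst₀.le) hst₀
  linarith
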